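/- Let μ be a measure on R^n which is absolutely α-decaying and δ-Ahlfors regular. Then for any ball B of radius r < r_0 centered in the support of μ, any hyperplane L, and ε > 0, the number of disjoint balls of radius ρ ≤ ε/2 centered in supp(μ), contained in B and intersecting the ε/2-neighborhood of L, is at most C' (ε/r)^α (r/ρ)^δ for a constant C' depending only on the constants of μ. -/

import Mathlib

open MeasureTheory Metric

/-- The support of a measure on Euclidean space: points all of whose neighbourhoods
have positive measure. -/
def measSupp {n : ℕ} (μ : Measure (EuclideanSpace ℝ (Fin n))) :
    Set (EuclideanSpace ℝ (Fin n)) :=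
  {x | ∀ r : ℝ, 0 < r → 0 < μ (Metric.ball x r)}

/-- The ε-neighbourhood of the affine hyperplane {w : u·w = t}. -/
def hypNbhd {n : ℕ} (u : EuclideanSpace ℝ (Fin n)) (t ε : ℝ) :
    Set (EuclideanSpace ℝ (Fin n)) :=
  {z | ∃ w : EuclideanSpace ℝ (Fin n), (∑ i, u i * w i) = t ∧ dist z w ≤ ε}

theorem stmt8 (n : ℕ) (μ : Measure (EuclideanSpace ℝ (Fin n)))
    (C a b α δ r₀ : ℝ) (hC : 0 < C) (ha : 0 < a) (hb : 0 < b) (hα : 0 < α)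
    (hδ : 0 < δ) (hr₀ : 0 < r₀)
    (hreg : ∀ c ∈ measSupp μ, ∀ r : ℝ, 0 < r → r < r₀ →
      ENNReal.ofReal (a * r ^ δ) ≤ μ (closedBall c r) ∧
        μ (closedBall c r) ≤ ENNReal.ofReal (b * r ^ δ))
    (hdec : ∀ u : EuclideanSpace ℝ (Fin n), u ≠ 0 → ∀ t ε : ℝ, 0 < ε →
      ∀ x ∈ measSupp μ, ∀ r : ℝ, 0 < r → r < r₀ →
        μ (closedBall x r ∩ hypNbhd u t ε) ≤
          ENNReal.ofReal (C * (ε / r) ^ α) * μ (closedBall x r)) :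
    ∃ C' > (0 : ℝ), ∀ x₀ ∈ measSupp μ, ∀ r : ℝ, 0 < r → r < r₀ →
      ∀ u : EuclideanSpace ℝ (Fin n), u ≠ 0 → ∀ t ε ρ : ℝ, 0 < ε → 0 < ρ → ρ ≤ ε / 2 →
        ∀ F : Finset (EuclideanSpace ℝ (Fin n)),
          (∀ c ∈ F, c ∈ measSupp μ ∧ closedBall c ρ ⊆ closedBall x₀ r ∧
            (closedBall c ρ ∩ hypNbhd u t (ε / 2)).Nonempty) →
          (∀ c ∈ F, ∀ c' ∈ F, c ≠ c' → Disjoint (closedBall c ρ) (closedBall c' ρ)) →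
          (F.card : ℝ) ≤ C' * (ε / r) ^ α * (r / ρ) ^ δ := by
  refine ⟨C * b / a * (3 / 2) ^ α, by positivity, ?_⟩
  intro x₀ hx₀ r hr hrr₀ u hu t ε ρ hε hρ hρε F hF hdisj
  have hP : (0:ℝ) ≤ (ε / r) ^ α := Real.rpow_nonneg (by positivity) _
  have hQ : (0:ℝ) ≤ (r / ρ) ^ δ := Real.rpow_nonneg (by positivity) _
  rcases F.eq_empty_or_nonempty with rfl | ⟨c₀, hc₀⟩
  · simp only [Finset.card_empty, Nat.cast_zero]
    positivity
  -- first show ρ ≤ r, using two antipodal points of a small ball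
  have hρr : ρ ≤ r := by
    obtain ⟨-, hsub, -⟩ := hF c₀ hc₀
    have hu' : (0:ℝ) < ‖u‖ := norm_pos_iff.mpr hu
    set v : EuclideanSpace ℝ (Fin n) := (ρ / ‖u‖) • u with hv
    have hnv : ‖v‖ = ρ := by
      rw [hv, norm_smul, Real.norm_eq_abs, abs_of_pos (by positivity)]
      field_simp
    have h1 : c₀ + v ∈ closedBall x₀ r := by
      apply hsub
      simp [mem_closedBall, dist_eq_norm, hnv]
    have h2 : c₀ - v ∈ closedBall x₀ r := by
      apply hsub
      simp [mem_closedBall, dist_eq_norm, norm_sub_rev, hnv]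
    have hd : dist (c₀ + v) (c₀ - v) ≤ 2 * r := by
      calc dist (c₀ + v) (c₀ - v) ≤ dist (c₀ + v) x₀ + dist x₀ (c₀ - v) := dist_triangle _ _ _
        _ ≤ r + r := add_le_add (mem_closedBall.mp h1) (by
              rw [dist_comm]; exact mem_closedBall.mp h2)
        _ = 2 * r := by ring
    have hd2 : dist (c₀ + v) (c₀ - v) = 2 * ρ := by
      rw [dist_eq_norm]
      have : c₀ + v - (c₀ - v) = (2:ℝ) • v := by
        rw [two_smul]; abel
      rw [this, norm_smul, hnv]
      simp
    linarith [hd2 ▸ hd]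
  -- each ball is inside the (3/2)ε neighbourhood
  have hsub : (⋃ c ∈ F, closedBall c ρ) ⊆ closedBall x₀ r ∩ hypNbhd u t (3 / 2 * ε) := by
    intro z hz
    simp only [Set.mem_iUnion] at hz
    obtain ⟨c, hc, hzc⟩ := hz
    obtain ⟨-, hsub, y, hy1, w, hw, hyw⟩ := hF c hc
    refine ⟨hsub hzc, w, hw, ?_⟩
    have : dist z w ≤ dist z c + dist c y + dist y w := dist_triangle4 _ _ _ _
    have h1 : dist z c ≤ ρ := mem_closedBall.mp hzc
    have h2 : dist c y ≤ ρ := by rw [dist_comm]; exact mem_closedBall.mp hy1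
    linarith
  -- measure of the union
  have hmeas : μ (⋃ c ∈ F, closedBall c ρ) = ∑ c ∈ F, μ (closedBall c ρ) :=
    measure_biUnion_finset
      (fun c hc c' hc' hne => hdisj c hc c' hc' hne)
      (fun c _ => measurableSet_closedBall)
  have hlow : (F.card : ENNReal) * ENNReal.ofReal (a * ρ ^ δ) ≤ ∑ c ∈ F, μ (closedBall c ρ) := by
    calc (F.card : ENNReal) * ENNReal.ofReal (a * ρ ^ δ)
        = ∑ _c ∈ F, ENNReal.ofReal (a * ρ ^ δ) := by
          rw [Finset.sum_const, nsmul_eq_mul]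
      _ ≤ ∑ c ∈ F, μ (closedBall c ρ) := by
          refine Finset.sum_le_sum fun c hc => ?_
          exact (hreg c (hF c hc).1 ρ hρ (lt_of_le_of_lt hρr hrr₀)).1
  have hup : μ (⋃ c ∈ F, closedBall c ρ) ≤
      ENNReal.ofReal (C * (3 / 2 * ε / r) ^ α) * ENNReal.ofReal (b * r ^ δ) := by
    calc μ (⋃ c ∈ F, closedBall c ρ)
        ≤ μ (closedBall x₀ r ∩ hypNbhd u t (3 / 2 * ε)) := measure_mono hsub
      _ ≤ ENNReal.ofReal (C * (3 / 2 * ε / r) ^ α) * μ (closedBall x₀ r) :=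
          hdec u hu t (3 / 2 * ε) (by positivity) x₀ hx₀ r hr hrr₀
      _ ≤ _ := mul_le_mul_right (hreg x₀ hx₀ r hr hrr₀).2 _
  have key : (F.card : ENNReal) * ENNReal.ofReal (a * ρ ^ δ) ≤
      ENNReal.ofReal (C * (3 / 2 * ε / r) ^ α * (b * r ^ δ)) := by
    refine le_trans hlow (le_trans (le_of_eq hmeas.symm) (hup.trans (le_of_eq ?_)))
    rw [ENNReal.ofReal_mul (show (0:ℝ) ≤ C * (3 / 2 * ε / r) ^ α by positivity)]
  -- convert to reals
  have hreal : (F.card : ℝ) * (a * ρ ^ δ) ≤ C * (3 / 2 * ε / r) ^ α * (b * r ^ δ) := by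
    have h1 : ENNReal.ofReal ((F.card : ℝ) * (a * ρ ^ δ)) ≤
        ENNReal.ofReal (C * (3 / 2 * ε / r) ^ α * (b * r ^ δ)) := by
      rwa [ENNReal.ofReal_mul (by positivity), ENNReal.ofReal_natCast]
    exact (ENNReal.ofReal_le_ofReal_iff (by positivity)).mp h1
  -- rpow algebra
  have e1 : (3 / 2 * ε / r) ^ α = (3 / 2 : ℝ) ^ α * (ε / r) ^ α := by
    rw [mul_div_assoc, Real.mul_rpow (by norm_num) (by positivity)]
  have e2 : (r / ρ) ^ δ * ρ ^ δ = r ^ δ := by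
    rw [← Real.mul_rpow (by positivity) hρ.le]
    field_simp
  have haρ : (0:ℝ) < a * ρ ^ δ := by positivity
  rw [← mul_le_mul_iff_of_pos_right haρ]
  calc (F.card : ℝ) * (a * ρ ^ δ) ≤ C * (3 / 2 * ε / r) ^ α * (b * r ^ δ) := hreal
    _ = C * b / a * (3 / 2) ^ α * (ε / r) ^ α * (r / ρ) ^ δ * (a * ρ ^ δ) := by
        rw [e1, ← e2]; field_simp
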